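/- Up to isomorphism there are exactly n+1 semigroups of the form (IS_n, *_α) with α ∈ IS_n. -/

import Mathlib

/-- `PInj n` : the symmetric inverse semigroup `IS_n`, modeled as partial
injective maps `Fin n → Option (Fin n)`. -/
abbrev PInj (n : ℕ) : Type :=
  {f : Fin n → Option (Fin n) // ∀ x y z : Fin n, f x = some z → f y = some z → x = y}

/-- Composition, applying `f` first, then `g` (left-to-right, as in the paper). -/
def PInj.comp {n : ℕ} (f g : PInj n) : PInj n :=
  ⟨fun x => (f.1 x).bind g.1, by
    intro x y z hx hy
    rcases Option.bind_eq_some_iff.mp hx with ⟨w, hfw, hgw⟩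
    rcases Option.bind_eq_some_iff.mp hy with ⟨v, hfv, hgv⟩
    cases g.2 w v z hgw hgv
    exact f.2 x y w hfw hfv⟩

/-- The deformed multiplication `x *_α y = x · α · y` on `PInj n`. -/
def PInj.dmul {n : ℕ} (α x y : PInj n) : PInj n := (x.comp α).comp y

/-- The range (image) of a partial injection. -/
def PInj.ran {n : ℕ} (f : PInj n) : Set (Fin n) := {y | ∃ x, f.1 x = some y}

/-- The domain of a partial injection. -/
def PInj.dom {n : ℕ} (f : PInj n) : Set (Fin n) := {x | (f.1 x).isSome}

/-- The rank of a partial injection: the cardinality of its range. -/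
noncomputable def PInj.rank {n : ℕ} (f : PInj n) : ℕ := f.ran.ncard

/-- The permutation `σ ∈ S_n` viewed as an element of `IS_n`. -/
def PInj.ofPerm {n : ℕ} (σ : Equiv.Perm (Fin n)) : PInj n :=
  ⟨fun x => some (σ x), by
    intro x y z hx hy
    exact σ.injective ((Option.some.inj hx).trans (Option.some.inj hy).symm)⟩


namespace PInj
variable {n : ℕ}

theorem ext' {f g : PInj n} (h : ∀ x, f.1 x = g.1 x) : f = g :=
  Subtype.ext (funext h)

@[simp] theorem comp_apply (f g : PInj n) (x : Fin n) :
    (f.comp g).1 x = (f.1 x).bind g.1 := rfl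

theorem comp_assoc (f g h : PInj n) : (f.comp g).comp h = f.comp (g.comp h) := by
  refine ext' fun x => ?_
  simp [Option.bind_assoc]; rfl

@[simp] theorem ofPerm_apply (σ : Equiv.Perm (Fin n)) (x : Fin n) :
    (ofPerm σ).1 x = some (σ x) := rfl

theorem ofPerm_comp_ofPerm (σ τ : Equiv.Perm (Fin n)) :
    (ofPerm σ).comp (ofPerm τ) = ofPerm (σ.trans τ) := by
  refine ext' fun x => ?_; simp

theorem comp_ofPerm_refl (f : PInj n) : f.comp (ofPerm (Equiv.refl _)) = f := by
  refine ext' fun x => ?_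
  cases h : f.1 x <;> simp [ofPerm, h]

theorem ofPerm_refl_comp (f : PInj n) : (ofPerm (Equiv.refl _)).comp f = f := by
  refine ext' fun x => ?_; simp [ofPerm]

/-- extend an injective-on-s partial function to a permutation -/
theorem exists_perm_extend (s : Set (Fin n)) (f : Fin n → Fin n)
    (hinj : Set.InjOn f s) : ∃ σ : Equiv.Perm (Fin n), ∀ x ∈ s, σ x = f x := by
  classical
  set t := f '' s with ht
  have hcard : sᶜ.ncard = tᶜ.ncard := by
    have h1 := Set.ncard_add_ncard_compl s
    have h2 := Set.ncard_add_ncard_compl t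
    have : t.ncard = s.ncard := Set.ncard_image_of_injOn hinj
    omega
  have : Fintype.card ↥sᶜ = Fintype.card ↥tᶜ := by
    rw [← Nat.card_eq_fintype_card, ← Nat.card_eq_fintype_card,
      Nat.card_coe_set_eq, Nat.card_coe_set_eq, hcard]
  obtain g := Fintype.equivOfCardEq this
  set F : Fin n → Fin n := fun x => if h : x ∈ s then f x else (g ⟨x, h⟩ : Fin n) with hF
  have hFs : ∀ x ∈ s, F x = f x := fun x hx => by simp [hF, hx]
  have hFinj : Function.Injective F := by
    intro a b hab
    by_cases ha : a ∈ s <;> by_cases hb : b ∈ s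
    · exact hinj ha hb (by simpa [hF, ha, hb] using hab)
    · exfalso
      have h1 : F a ∈ t := ⟨a, ha, (hFs a ha).symm⟩
      have h2 : F b ∈ tᶜ := by simp only [hF, hb, dif_neg, not_false_iff]; exact (g ⟨b, hb⟩).2
      rw [hab] at h1; exact h2 h1
    · exfalso
      have h1 : F b ∈ t := ⟨b, hb, (hFs b hb).symm⟩
      have h2 : F a ∈ tᶜ := by simp only [hF, ha, dif_neg, not_false_iff]; exact (g ⟨a, ha⟩).2
      rw [hab] at h2; exact h2 h1
    · have := g.injective (a₁ := ⟨a, ha⟩) (a₂ := ⟨b, hb⟩) (Subtype.ext (by simpa [hF, ha, hb] using hab))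
      exact congrArg Subtype.val this
  exact ⟨Equiv.ofBijective F (Finite.injective_iff_bijective.mp hFinj), fun x hx => hFs x hx⟩

end PInj

namespace PInj
variable {n : ℕ}

def epsilon (n k : ℕ) : PInj n :=
  ⟨fun x => if x.val < k then some x else none, by
    intro x y z hx hy
    simp only at hx hy
    split at hx
    · split at hy
      · rw [(Option.some.inj hx), (Option.some.inj hy)]
      · exact absurd hy (by simp)
    · exact absurd hx (by simp)⟩

@[simp] theorem epsilon_apply (k : ℕ) (x : Fin n) :
    (epsilon n k).1 x = if x.val < k then some x else none := rfl

theorem ran_epsilon (k : ℕ) : (epsilon n k).ran = {x : Fin n | x.val < k} := by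
  ext y
  constructor
  · rintro ⟨x, hx⟩
    simp only [epsilon_apply] at hx
    split at hx
    · cases Option.some.inj hx; assumption
    · exact absurd hx (by simp)
  · intro hy
    exact ⟨y, by simp [Set.mem_setOf_eq.mp hy]⟩

theorem rank_epsilon (k : ℕ) (hk : k ≤ n) : (epsilon n k).rank = k := by
  have himg : {x : Fin n | x.val < k} = Fin.castLE hk '' Set.univ := by
    ext x
    simp only [Set.image_univ, Set.mem_setOf_eq, Set.mem_range]
    constructor
    · intro hx; exact ⟨⟨x.val, hx⟩, by ext; simp⟩
    · rintro ⟨i, rfl⟩; exact i.2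
  rw [rank, ran_epsilon, himg,
    Set.ncard_image_of_injective _ (Fin.castLE_injective hk), Set.ncard_univ]
  simp

theorem rank_le (f : PInj n) : f.rank ≤ n := by
  have := Set.ncard_le_ncard (Set.subset_univ f.ran) (Set.toFinite _)
  rwa [Set.ncard_univ, Nat.card_eq_fintype_card, Fintype.card_fin] at this

theorem ncard_dom (f : PInj n) : f.dom.ncard = f.rank := by
  classical
  have himg : f.ran = (fun x => (f.1 x).getD x) '' f.dom := by
    ext y
    constructor
    · rintro ⟨x, hx⟩
      exact ⟨x, by simp [dom, hx], by simp [hx]⟩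
    · rintro ⟨x, hx, rfl⟩
      obtain ⟨v, hv⟩ := Option.isSome_iff_exists.mp hx
      exact ⟨x, by simp [hv]⟩
  have hinj : Set.InjOn (fun x => (f.1 x).getD x) f.dom := by
    intro a ha b hb hab
    obtain ⟨v, hv⟩ := Option.isSome_iff_exists.mp ha
    obtain ⟨w, hw⟩ := Option.isSome_iff_exists.mp hb
    simp only [hv, hw, Option.getD_some] at hab
    exact f.2 a b w (hab ▸ hv) hw
  rw [rank, himg, Set.ncard_image_of_injOn hinj]

theorem epsilon_comp_epsilon {r k : ℕ} (h : r ≤ k) :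
    (epsilon n r).comp (epsilon n k) = epsilon n r := by
  refine ext' fun x => ?_
  by_cases hx : x.val < r
  · simp [hx, lt_of_lt_of_le hx h]
  · simp [hx]

theorem ran_comp_subset (f g : PInj n) : (f.comp g).ran ⊆ g.ran := by
  rintro y ⟨x, hx⟩
  rcases Option.bind_eq_some_iff.mp hx with ⟨w, _, hgw⟩
  exact ⟨w, hgw⟩

theorem rank_comp_le_right (f g : PInj n) : (f.comp g).rank ≤ g.rank :=
  Set.ncard_le_ncard (ran_comp_subset f g) (Set.toFinite _)

theorem rank_comp_le_left (f g : PInj n) : (f.comp g).rank ≤ f.rank := by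
  classical
  set φ : Fin n → Fin n := fun y => if h : ∃ w, g.1 w = some y then h.choose else y with hφ
  have hspec : ∀ y, (∃ w, g.1 w = some y) → g.1 (φ y) = some y := by
    intro y h
    simp only [hφ, dif_pos h]
    exact h.choose_spec
  refine Set.ncard_le_ncard_of_injOn φ ?_ ?_ (Set.toFinite _)
  · rintro y ⟨x, hx⟩
    rcases Option.bind_eq_some_iff.mp hx with ⟨w, hfw, hgw⟩
    have h : ∃ w, g.1 w = some y := ⟨w, hgw⟩
    have := g.2 (φ y) w y (hspec y h) hgw
    exact this ▸ ⟨x, hfw⟩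
  · rintro y1 ⟨x1, hx1⟩ y2 ⟨x2, hx2⟩ h12
    rcases Option.bind_eq_some_iff.mp hx1 with ⟨w1, _, hg1⟩
    rcases Option.bind_eq_some_iff.mp hx2 with ⟨w2, _, hg2⟩
    have e1 := hspec y1 ⟨w1, hg1⟩
    have e2 := hspec y2 ⟨w2, hg2⟩
    rw [h12, e2] at e1
    exact (Option.some.inj e1).symm

theorem rank_dmul_le (α x y : PInj n) : (dmul α x y).rank ≤ α.rank :=
  le_trans (rank_comp_le_left _ _) (rank_comp_le_right _ _)

end PInj

namespace PInj
variable {n : ℕ}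

theorem exists_decomp (α : PInj n) :
    ∃ σ τ : Equiv.Perm (Fin n),
      α = ((ofPerm σ).comp (epsilon n α.rank)).comp (ofPerm τ) := by
  classical
  set k := α.rank with hk
  have hkn : k ≤ n := rank_le α
  have hfin : α.dom.Finite := Set.toFinite _
  set Df := hfin.toFinset with hDf
  have hcard : Df.card = k := by
    rw [hDf, ← Set.ncard_eq_toFinset_card α.dom hfin, ncard_dom]
  set ι := Df.orderIsoOfFin hcard with hι
  set f1 : Fin n → Fin n := fun x =>
    if h : x ∈ Df then Fin.castLE hkn (ι.symm ⟨x, h⟩) else x with hf1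
  have hf1inj : Set.InjOn f1 α.dom := by
    intro a ha b hb hab
    have ha' : a ∈ Df := hfin.mem_toFinset.mpr ha
    have hb' : b ∈ Df := hfin.mem_toFinset.mpr hb
    simp only [hf1, dif_pos ha', dif_pos hb'] at hab
    have := ι.symm.injective (Fin.castLE_injective hkn hab)
    exact congrArg Subtype.val (by exact_mod_cast this)
  obtain ⟨σ, hσ⟩ := exists_perm_extend α.dom f1 hf1inj
  have hσlt : ∀ x ∈ α.dom, (σ x).val < k := by
    intro x hx
    have hx' : x ∈ Df := hfin.mem_toFinset.mpr hx
    rw [hσ x hx]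
    simp only [hf1, dif_pos hx']
    exact (ι.symm ⟨x, hx'⟩).2
  have hσD : σ '' α.dom = {i : Fin n | i.val < k} := by
    refine Set.eq_of_subset_of_ncard_le ?_ ?_ (Set.toFinite _)
    · rintro _ ⟨x, hx, rfl⟩; exact hσlt x hx
    · have h1 : (σ '' α.dom).ncard = k := by
        rw [Set.ncard_image_of_injective _ σ.injective, ncard_dom]
      have h2 : ({i : Fin n | i.val < k}).ncard = k := by
        have := rank_epsilon (n := n) k hkn
        rwa [rank, ran_epsilon] at this
      rw [h1, h2]
  have hσnot : ∀ x, x ∉ α.dom → ¬ (σ x).val < k := by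
    intro x hx hlt
    have : σ x ∈ σ '' α.dom := hσD ▸ hlt
    rcases this with ⟨d, hd, hdx⟩
    exact hx (σ.injective hdx ▸ hd)
  set g1 : Fin n → Fin n := fun i =>
    if h : (α.1 (σ.symm i)).isSome then (α.1 (σ.symm i)).get h else i with hg1
  have hmemD : ∀ i : Fin n, i.val < k → σ.symm i ∈ α.dom := by
    intro i hi
    have : i ∈ σ '' α.dom := hσD ▸ hi
    rcases this with ⟨d, hd, rfl⟩
    rwa [Equiv.symm_apply_apply]
  have hg1inj : Set.InjOn g1 {i : Fin n | i.val < k} := by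
    intro i hi j hj hij
    have hdi := hmemD i hi
    have hdj := hmemD j hj
    have hdi' : (α.1 (σ.symm i)).isSome := hdi
    have hdj' : (α.1 (σ.symm j)).isSome := hdj
    simp only [hg1] at hij
    rw [dif_pos hdi', dif_pos hdj'] at hij
    have e1 : α.1 (σ.symm i) = some ((α.1 (σ.symm i)).get hdi') := (Option.some_get hdi').symm
    have e2 : α.1 (σ.symm j) = some ((α.1 (σ.symm j)).get hdj') := (Option.some_get hdj').symm
    rw [hij] at e1
    have := α.2 _ _ _ e1 e2
    exact σ.symm.injective this
  obtain ⟨τ, hτ⟩ := exists_perm_extend _ g1 hg1inj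
  refine ⟨σ, τ, ext' fun x => ?_⟩
  by_cases hx : x ∈ α.dom
  · have hlt := hσlt x hx
    have hτσ : τ (σ x) = g1 (σ x) := hτ (σ x) hlt
    have hsym : σ.symm (σ x) = x := Equiv.symm_apply_apply σ x
    have hs : (α.1 (σ.symm (σ x))).isSome := by rw [hsym]; exact hx
    simp only [comp_apply, ofPerm_apply, Option.bind_some, epsilon_apply, if_pos hlt,
      Option.bind_some]
    rw [hτσ]
    simp only [hg1, dif_pos hs]
    rw [Option.some_get hs, hsym]
  · have hnlt := hσnot x hx
    have hnone : α.1 x = none := Option.not_isSome_iff_eq_none.mp hx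
    simp [hnone, hnlt]

end PInj

namespace PInj
variable {n : ℕ}

theorem c3 (σ : Equiv.Perm (Fin n)) :
    (ofPerm σ).comp (ofPerm σ.symm) = ofPerm (Equiv.refl _) := by
  rw [ofPerm_comp_ofPerm, Equiv.self_trans_symm]

theorem c3' (σ : Equiv.Perm (Fin n)) :
    (ofPerm σ.symm).comp (ofPerm σ) = ofPerm (Equiv.refl _) := by
  rw [ofPerm_comp_ofPerm, Equiv.symm_trans_self]

theorem c1 (σ : Equiv.Perm (Fin n)) (f : PInj n) :
    (ofPerm σ).comp ((ofPerm σ.symm).comp f) = f := by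
  rw [← comp_assoc, c3, ofPerm_refl_comp]

theorem c2 (σ : Equiv.Perm (Fin n)) (f : PInj n) :
    (ofPerm σ.symm).comp ((ofPerm σ).comp f) = f := by
  rw [← comp_assoc, c3', ofPerm_refl_comp]

theorem dmul_epsilon_surj {k : ℕ} (g : PInj n) (hg : g.rank ≤ k) :
    ∃ x y, dmul (epsilon n k) x y = g := by
  obtain ⟨σ, τ, hdec⟩ := exists_decomp g
  refine ⟨(ofPerm σ).comp (epsilon n g.rank), ofPerm τ, ?_⟩
  rw [dmul, comp_assoc, comp_assoc,
    ← comp_assoc (epsilon n g.rank) (epsilon n k) (ofPerm τ),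
    epsilon_comp_epsilon hg, ← comp_assoc, ← hdec]

theorem prodSet_eq (α : PInj n) :
    {g : PInj n | ∃ x y, dmul α x y = g} = {g : PInj n | g.rank ≤ α.rank} := by
  obtain ⟨σ, τ, hdec⟩ := exists_decomp α
  ext g
  constructor
  · rintro ⟨x, y, rfl⟩
    exact rank_dmul_le α x y
  · intro hg
    obtain ⟨x, y, hxy⟩ := dmul_epsilon_surj g hg
    refine ⟨x.comp (ofPerm σ.symm), (ofPerm τ.symm).comp y, ?_⟩
    rw [← hxy]
    conv_lhs => rw [hdec]
    simp only [dmul, comp_assoc, c1, c2]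

theorem main_iso (α : PInj n) :
    ∃ e : PInj n ≃ PInj n, ∀ x y : PInj n,
      e (dmul α x y) = dmul (epsilon n α.rank) (e x) (e y) := by
  obtain ⟨σ, τ, hdec⟩ := exists_decomp α
  refine ⟨⟨fun x => ((ofPerm τ).comp x).comp (ofPerm σ),
          fun x => ((ofPerm τ.symm).comp x).comp (ofPerm σ.symm), ?_, ?_⟩, ?_⟩
  · intro x
    simp only [comp_assoc, c1, c2, c3, c3', comp_ofPerm_refl, ofPerm_refl_comp]
  · intro x
    simp only [comp_assoc, c1, c2, c3, c3', comp_ofPerm_refl, ofPerm_refl_comp]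
  · intro x y
    show ((ofPerm τ).comp (dmul α x y)).comp (ofPerm σ) = _
    conv_lhs => rw [hdec]
    simp only [dmul, comp_assoc, Equiv.coe_fn_mk]

end PInj

namespace PInj
variable {n : ℕ}

theorem epsilon_ne {j k : ℕ} (hjk : j < k) (hkn : k ≤ n) :
    epsilon n j ≠ epsilon n k := by
  intro h
  have hjn : j < n := lt_of_lt_of_le hjk hkn
  have := congrFun (congrArg Subtype.val h) ⟨j, hjn⟩
  simp [hjk] at this

theorem rank_set_ssubset {j k : ℕ} (hjk : j < k) (hkn : k ≤ n) :
    {g : PInj n | g.rank ≤ j} ⊂ {g : PInj n | g.rank ≤ k} := by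
  have hsub : {g : PInj n | g.rank ≤ j} ⊆ {g : PInj n | g.rank ≤ k} :=
    fun g hg => le_trans hg (le_of_lt hjk)
  refine (Set.ssubset_iff_of_subset hsub).mpr ⟨epsilon n k, ?_, ?_⟩
  · simp [rank_epsilon k hkn]
  · simp only [Set.mem_setOf_eq, rank_epsilon k hkn]
    omega

end PInj

theorem card_iso_classes_IS' (n : ℕ) :
    ∃ S : Finset (PInj n), S.card = n + 1 ∧
      (∀ α : PInj n, ∃ β ∈ S, ∃ e : PInj n ≃ PInj n, ∀ x y : PInj n,
          e (PInj.dmul α x y) = PInj.dmul β (e x) (e y)) ∧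
      (∀ β ∈ S, ∀ γ ∈ S,
        (∃ e : PInj n ≃ PInj n, ∀ x y : PInj n,
            e (PInj.dmul β x y) = PInj.dmul γ (e x) (e y)) → β = γ) := by
  classical
  refine ⟨(Finset.range (n+1)).image (fun k => PInj.epsilon n k), ?_, ?_, ?_⟩
  · rw [Finset.card_image_of_injOn, Finset.card_range]
    intro j hj k hk h
    rcases lt_trichotomy j k with h'|h'|h'
    · exact absurd h (PInj.epsilon_ne h' (Nat.lt_succ_iff.mp (Finset.mem_range.mp hk)))
    · exact h'
    · exact absurd h.symm (PInj.epsilon_ne h' (Nat.lt_succ_iff.mp (Finset.mem_range.mp hj)))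
  · intro α
    exact ⟨PInj.epsilon n α.rank,
      Finset.mem_image.mpr ⟨α.rank, Finset.mem_range.mpr (Nat.lt_succ_of_le α.rank_le), rfl⟩,
      PInj.main_iso α⟩
  · intro β hβ γ hγ h
    obtain ⟨e, he⟩ := h
    obtain ⟨j, hj, rfl⟩ := Finset.mem_image.mp hβ
    obtain ⟨k, hk, rfl⟩ := Finset.mem_image.mp hγ
    have hjn : j ≤ n := Nat.lt_succ_iff.mp (Finset.mem_range.mp hj)
    have hkn : k ≤ n := Nat.lt_succ_iff.mp (Finset.mem_range.mp hk)
    have himg : e '' {g | ∃ x y, PInj.dmul (PInj.epsilon n j) x y = g}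
        = {g | ∃ x y, PInj.dmul (PInj.epsilon n k) x y = g} := by
      ext g
      constructor
      · rintro ⟨_, ⟨x, y, rfl⟩, rfl⟩
        exact ⟨e x, e y, (he x y).symm⟩
      · rintro ⟨u, v, rfl⟩
        refine ⟨PInj.dmul (PInj.epsilon n j) (e.symm u) (e.symm v), ⟨_, _, rfl⟩, ?_⟩
        rw [he]
        simp
    have hcard : ({g : PInj n | g.rank ≤ j}).ncard = ({g : PInj n | g.rank ≤ k}).ncard := by
      have h2 := congrArg Set.ncard himg
      rwa [Set.ncard_image_of_injective _ e.injective, PInj.prodSet_eq, PInj.prodSet_eq,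
        PInj.rank_epsilon j hjn, PInj.rank_epsilon k hkn] at h2
    have hjk : j = k := by
      rcases lt_trichotomy j k with h'|h'|h'
      · exact absurd hcard
          (ne_of_lt (Set.ncard_lt_ncard (PInj.rank_set_ssubset h' hkn) (Set.toFinite _)))
      · exact h'
      · exact absurd hcard.symm
          (ne_of_lt (Set.ncard_lt_ncard (PInj.rank_set_ssubset h' hjn) (Set.toFinite _)))
    rw [hjk]


/-- Up to isomorphism there are exactly `n + 1` semigroups of the form
`(IS_n, *_α)`: there is a set of `n + 1` deforming elements meeting every
isomorphism class exactly once. -/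
theorem card_iso_classes_IS (n : ℕ) :
    ∃ S : Finset (PInj n), S.card = n + 1 ∧
      (∀ α : PInj n, ∃ β ∈ S, ∃ e : PInj n ≃ PInj n, ∀ x y : PInj n,
          e (PInj.dmul α x y) = PInj.dmul β (e x) (e y)) ∧
      (∀ β ∈ S, ∀ γ ∈ S,
        (∃ e : PInj n ≃ PInj n, ∀ x y : PInj n,
            e (PInj.dmul β x y) = PInj.dmul γ (e x) (e y)) → β = γ) := by
  exact card_iso_classes_IS' n
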